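/- Let Γ ∈ ℝ^{n×n} be symmetric and invertible with e^⊤Γ^{-1}e ≠ 0, let γ ∈ ℝ^n, and let F ∈ ℝ^{n×n} be arbitrary. For σ > 0 define N(σ) = (σ²FF^⊤ − Γ)^{-1} and λ_k(σ) = (1 + γ^⊤N(σ)e)·(e^⊤N(σ)e_k)/(e^⊤N(σ)e) − γ^⊤N(σ)e_k. Then as σ → 0 from the right, λ_k(σ) converges to λ_k^0 = γ^⊤Γ^{-1}e_k + (1 − e^⊤Γ^{-1}γ)·(e^⊤Γ^{-1}e_k)/(e^⊤Γ^{-1}e), for every k = 1, …, n. -/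
import Mathlib


open Matrix

/-- Noise-free limit of the IGP Kriging coefficients: as the observation noise
`σ → 0⁺`, the Kriging coefficient `λ_k(σ)` computed from `N(σ) = (σ²FFᵀ - Γ)⁻¹`
converges to `λ_k⁰ = γᵀΓ⁻¹e_k + (1 - eᵀΓ⁻¹γ)·(eᵀΓ⁻¹e_k)/(eᵀΓ⁻¹e)`. -/
theorem kriging_coefficient_noise_free_limit
    (n : ℕ) (Γ : Matrix (Fin n) (Fin n) ℝ) (hΓ : Γ.IsSymm) (hinv : IsUnit Γ.det)
    (hΓe : (fun _ => (1 : ℝ)) ⬝ᵥ Γ⁻¹.mulVec (fun _ => (1 : ℝ)) ≠ 0)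
    (γ : Fin n → ℝ) (F : Matrix (Fin n) (Fin n) ℝ)
    (N : ℝ → Matrix (Fin n) (Fin n) ℝ)
    (hN : ∀ σ : ℝ, N σ = (σ ^ 2 • (F * Fᵀ) - Γ)⁻¹)
    (k : Fin n) :
    Filter.Tendsto
      (fun σ : ℝ =>
        (1 + γ ⬝ᵥ (N σ).mulVec (fun _ => (1 : ℝ)))
            * ((fun _ => (1 : ℝ)) ⬝ᵥ (N σ).mulVec (Pi.single k 1))
            / ((fun _ => (1 : ℝ)) ⬝ᵥ (N σ).mulVec (fun _ => (1 : ℝ)))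
          - γ ⬝ᵥ (N σ).mulVec (Pi.single k 1))
      (nhdsWithin 0 (Set.Ioi 0))
      (nhds (γ ⬝ᵥ Γ⁻¹.mulVec (Pi.single k 1)
        + (1 - (fun _ => (1 : ℝ)) ⬝ᵥ Γ⁻¹.mulVec γ)
            * ((fun _ => (1 : ℝ)) ⬝ᵥ Γ⁻¹.mulVec (Pi.single k 1))
            / ((fun _ => (1 : ℝ)) ⬝ᵥ Γ⁻¹.mulVec (fun _ => (1 : ℝ))))) := by
  classical
  set e : Fin n → ℝ := fun _ => (1 : ℝ) with he
  set ek : Fin n → ℝ := Pi.single k 1 with hek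
  -- the inverse of -Γ
  have hneg : (-Γ)⁻¹ = -(Γ⁻¹) := by
    apply Matrix.inv_eq_right_inv
    simp [Matrix.mul_nonsing_inv Γ hinv]
  -- symmetry of Γ⁻¹
  have hsymm : (Γ⁻¹)ᵀ = Γ⁻¹ := by
    rw [Matrix.transpose_nonsing_inv, hΓ]
  -- swap dot products through the symmetric Γ⁻¹
  have hswap : γ ⬝ᵥ Γ⁻¹.mulVec e = e ⬝ᵥ Γ⁻¹.mulVec γ := by
    rw [Matrix.dotProduct_mulVec, ← Matrix.mulVec_transpose, hsymm, dotProduct_comm]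
  -- the matrix path
  have hM : Filter.Tendsto (fun σ : ℝ => N σ) (nhdsWithin 0 (Set.Ioi 0))
      (nhds (-(Γ⁻¹))) := by
    have h00 : (0:ℝ) ^ 2 • (F * Fᵀ) - Γ = -Γ := by norm_num
    have hdet : ((0:ℝ) ^ 2 • (F * Fᵀ) - Γ).det ≠ 0 := by
      rw [h00, show (-Γ : Matrix (Fin n) (Fin n) ℝ) = (-1 : ℝ) • Γ by simp, Matrix.det_smul]
      simp only [ne_eq, mul_eq_zero, not_or]
      exact ⟨pow_ne_zero _ (by norm_num), hinv.ne_zero⟩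
    have hc : ContinuousAt (fun σ : ℝ => (σ ^ 2 • (F * Fᵀ) - Γ)⁻¹) 0 := by
      apply ContinuousAt.comp (g := Inv.inv)
      · apply continuousAt_matrix_inv
        have : (Ring.inverse : ℝ → ℝ) = Inv.inv := by
          funext x; exact Ring.inverse_eq_inv x
        rw [this]
        exact continuousAt_inv₀ hdet
      · exact (((continuousAt_id.pow 2).smul continuousAt_const).sub
          continuousAt_const)
    have h0 : ((0:ℝ) ^ 2 • (F * Fᵀ) - Γ)⁻¹ = -(Γ⁻¹) := by
      rw [h00, hneg]
    have := hc.continuousWithinAt (s := Set.Ioi 0)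
    rw [ContinuousWithinAt, h0] at this
    exact this.congr (fun σ => (hN σ).symm)
  -- the scalar function of the matrix
  have hden : e ⬝ᵥ (-(Γ⁻¹)).mulVec e ≠ 0 := by
    simpa [Matrix.neg_mulVec] using hΓe
  have hg : ContinuousAt (fun M : Matrix (Fin n) (Fin n) ℝ =>
      (1 + γ ⬝ᵥ M.mulVec e) * (e ⬝ᵥ M.mulVec ek) / (e ⬝ᵥ M.mulVec e)
        - γ ⬝ᵥ M.mulVec ek) (-(Γ⁻¹)) := by
    have h1 : Continuous (fun M : Matrix (Fin n) (Fin n) ℝ => γ ⬝ᵥ M.mulVec e) :=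
      continuous_const.dotProduct (continuous_id.matrix_mulVec continuous_const)
    have h2 : Continuous (fun M : Matrix (Fin n) (Fin n) ℝ => e ⬝ᵥ M.mulVec ek) :=
      continuous_const.dotProduct (continuous_id.matrix_mulVec continuous_const)
    have h3 : Continuous (fun M : Matrix (Fin n) (Fin n) ℝ => e ⬝ᵥ M.mulVec e) :=
      continuous_const.dotProduct (continuous_id.matrix_mulVec continuous_const)
    have h4 : Continuous (fun M : Matrix (Fin n) (Fin n) ℝ => γ ⬝ᵥ M.mulVec ek) :=
      continuous_const.dotProduct (continuous_id.matrix_mulVec continuous_const)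
    exact ((((continuous_const.add h1).mul h2).continuousAt.div
      h3.continuousAt hden)).sub h4.continuousAt
  have key := hg.tendsto.comp hM
  -- identify the limit value
  have hval : (1 + γ ⬝ᵥ (-(Γ⁻¹)).mulVec e) * (e ⬝ᵥ (-(Γ⁻¹)).mulVec ek)
        / (e ⬝ᵥ (-(Γ⁻¹)).mulVec e) - γ ⬝ᵥ (-(Γ⁻¹)).mulVec ek
      = γ ⬝ᵥ Γ⁻¹.mulVec ek
        + (1 - e ⬝ᵥ Γ⁻¹.mulVec γ) * (e ⬝ᵥ Γ⁻¹.mulVec ek) / (e ⬝ᵥ Γ⁻¹.mulVec e) := by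
    simp only [Matrix.neg_mulVec, dotProduct_neg]
    rw [← hswap]
    field_simp
    ring
  rw [hval] at key
  exact key
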